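/- The function E(x) = [ -2x(1-x)·log₂(2x(1-x)) - x²·log₂(x²) - (1-x)²·log₂((1-x)²) ] / (2x(1-x)) on (0,1) is minimized uniquely at x = 1/2, where E(1/2) = 3. -/

import Mathlib

open Real Set

noncomputable def gE (u : ℝ) : ℝ := -Real.log (1 - u) / u

-- Lemma A: key log inequality
lemma lemA : ∀ v ∈ Set.Ioo (0:ℝ) 1, Real.log v < 1/(2*v^2) - 2/v + 3/2 := by
  have h : StrictMonoOn (fun v : ℝ => Real.log v - 1/(2*v^2) + 2/v - 3/2) (Set.Ioc 0 1) := by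
    apply strictMonoOn_of_deriv_pos (convex_Ioc 0 1)
    · apply ContinuousOn.sub
      apply ContinuousOn.add
      apply ContinuousOn.sub
      · exact Real.continuousOn_log.mono (by intro x hx; simpa using ne_of_gt hx.1)
      · apply ContinuousOn.div continuousOn_const (by fun_prop)
        intro x hx; have := hx.1; positivity
      · apply ContinuousOn.div continuousOn_const continuousOn_id
        intro x hx; exact ne_of_gt hx.1
      · exact continuousOn_const
    · intro x hx
      rw [interior_Ioc] at hx
      have hx0 : x ≠ 0 := ne_of_gt hx.1
      have hd : HasDerivAt (fun v : ℝ => Real.log v - 1/(2*v^2) + 2/v - 3/2)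
          (x⁻¹ - (-(2*(2*x))/(2*x^2)^2) + (-2/x^2) - 0) x := by
        apply HasDerivAt.sub _ (hasDerivAt_const _ _)
        apply HasDerivAt.add
        apply HasDerivAt.sub (Real.hasDerivAt_log hx0)
        · have : HasDerivAt (fun v : ℝ => 2*v^2) (2*(2*x)) x := by
            simpa using ((hasDerivAt_pow 2 x).const_mul 2)
          simpa using (hasDerivAt_const x (1:ℝ)).fun_div this (by positivity)
        · have : HasDerivAt (fun v : ℝ => v) 1 x := hasDerivAt_id x
          simpa using (hasDerivAt_const x (2:ℝ)).fun_div this hx0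
      rw [hd.deriv]
      have h1 : x⁻¹ - (-(2*(2*x))/(2*x^2)^2) + (-2/x^2) - 0 = (x-1)^2/x^3 := by
        field_simp; ring
      rw [h1]
      have h2 : (x-1)^2 > 0 := by nlinarith [hx.1, hx.2]
      have hx1 : (0:ℝ) < x := hx.1
      positivity
  intro v hv
  have := h (Set.mem_Ioc.2 ⟨hv.1, le_of_lt hv.2⟩) (Set.mem_Ioc.2 ⟨one_pos, le_refl 1⟩) hv.2
  simp only [Real.log_one] at this
  nlinarith [this]

noncomputable def gE1 (u : ℝ) : ℝ := (u/(1-u) + Real.log (1-u)) / u^2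

lemma hasDerivAt_log1m {u : ℝ} (hu : u ≠ 1) :
    HasDerivAt (fun v : ℝ => Real.log (1 - v)) (-(1-u)⁻¹) u := by
  have h1 : HasDerivAt (fun v : ℝ => 1 - v) (-1) u := by
    simpa using (hasDerivAt_const u (1:ℝ)).fun_sub (hasDerivAt_id u)
  simpa [Function.comp_def] using (Real.hasDerivAt_log (by intro h; exact hu (by linarith [sub_eq_zero.mp h]))).comp u h1

lemma hasDerivAt_gE {u : ℝ} (hu : u ∈ Set.Ioo (0:ℝ) 1) : HasDerivAt gE (gE1 u) u := by
  have h1 := (hasDerivAt_log1m (ne_of_lt hu.2)).fun_neg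
  have h2 := h1.fun_div (hasDerivAt_id' u) (ne_of_gt hu.1)
  refine h2.congr_deriv ?_
  unfold gE1
  have h1u : (1:ℝ) - u ≠ 0 := by linarith [hu.2]
  field_simp
  ring

lemma hasDerivAt_gE1 {u : ℝ} (hu : u ∈ Set.Ioo (0:ℝ) 1) :
    HasDerivAt gE1 ((u/(1-u)^2 * u^2 - (u/(1-u) + Real.log (1-u)) * (2*u)) / (u^2)^2) u := by
  have h1u : (1:ℝ) - u ≠ 0 := by linarith [hu.2]
  have hu0 : u ≠ 0 := ne_of_gt hu.1
  have hN : HasDerivAt (fun v : ℝ => v/(1-v) + Real.log (1-v)) (u/(1-u)^2) u := by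
    have ha : HasDerivAt (fun v : ℝ => v/(1-v)) ((1*(1-u) - u*(-1))/(1-u)^2) u := by
      exact (hasDerivAt_id u).div (by simpa using (hasDerivAt_const u (1:ℝ)).fun_sub (hasDerivAt_id u)) h1u
    have := ha.fun_add (hasDerivAt_log1m (ne_of_lt hu.2))
    refine this.congr_deriv ?_
    field_simp
    ring
  have hD : HasDerivAt (fun v : ℝ => v^2) (2*u) u := by simpa using hasDerivAt_pow 2 u
  exact hN.div hD (by positivity)


lemma gE_strictConvex : StrictConvexOn ℝ (Set.Ioo (0:ℝ) 1) gE := by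
  apply strictConvexOn_of_deriv2_pos (convex_Ioo 0 1)
  · intro x hx
    exact (hasDerivAt_gE hx).continuousAt.continuousWithinAt
  · intro x hx
    rw [interior_Ioo] at hx
    have hder : deriv (deriv gE) x =
        (x/(1-x)^2 * x^2 - (x/(1-x) + Real.log (1-x)) * (2*x)) / (x^2)^2 := by
      have heq : Set.EqOn (deriv gE) gE1 (Set.Ioo 0 1) := fun y hy => (hasDerivAt_gE hy).deriv
      have : deriv gE =ᶠ[nhds x] gE1 :=
        Filter.eventuallyEq_of_mem (isOpen_Ioo.mem_nhds hx) heq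
      calc deriv (deriv gE) x = deriv gE1 x := this.deriv_eq
        _ = _ := (hasDerivAt_gE1 hx).deriv
    show 0 < deriv (deriv gE) x
    rw [hder]
    -- positivity: need x^2/(1-x)^2 - 2x/(1-x) - 2 log(1-x) > 0
    have h1x : (0:ℝ) < 1 - x := by linarith [hx.2]
    have hx0 : (0:ℝ) < x := hx.1
    have key := lemA (1-x) (by constructor <;> [linarith; linarith [hx.1]])
    -- log (1-x) < 1/(2(1-x)^2) - 2/(1-x) + 3/2
    rw [div_pos_iff]
    left
    constructor
    · have key2 : Real.log (1-x) * (2*(1-x)^2) < 3*x^2 - 2*x := by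
        have h2 : (0:ℝ) < 2*(1-x)^2 := by positivity
        have := (mul_lt_mul_of_pos_right key h2)
        calc Real.log (1-x) * (2*(1-x)^2) < (1/(2*(1-x)^2) - 2/(1-x) + 3/2) * (2*(1-x)^2) := this
          _ = 3*x^2 - 2*x := by field_simp; ring
      have e2 : x / (1 - x) ^ 2 * x ^ 2 - (x / (1 - x) + Real.log (1 - x)) * (2 * x)
          = (x^3 - 2*x^2*(1-x) - x*(Real.log (1-x) * (2*(1-x)^2)))/(1-x)^2 := by
        field_simp; ring
      rw [e2]
      apply div_pos _ (by positivity)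
      nlinarith [mul_lt_mul_of_pos_left key2 hx0]
    · positivity


lemma gE_half : gE (1/2) = 2 * Real.log 2 := by
  unfold gE
  rw [show (1:ℝ) - 1/2 = 2⁻¹ by norm_num, Real.log_inv]
  ring

lemma lemC : ∀ x ∈ Set.Ioo (0:ℝ) 1, x ≠ 1/2 → 4 * Real.log 2 < gE x + gE (1-x) := by
  intro x hx hne
  have hx' : 1 - x ∈ Set.Ioo (0:ℝ) 1 := ⟨by linarith [hx.2], by linarith [hx.1]⟩
  have hne' : x ≠ 1 - x := fun h => hne (by linarith)
  have := gE_strictConvex.2 hx hx' hne' one_half_pos one_half_pos (by norm_num)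
  simp only [smul_eq_mul] at this
  have he : (1:ℝ)/2 * x + 1/2 * (1-x) = 1/2 := by ring
  rw [he, gE_half] at this
  linarith

lemma lemD (x : ℝ) (hx : x ∈ Set.Ioo (0:ℝ) 1) :
    (-(2 * x * (1 - x)) * Real.logb 2 (2 * x * (1 - x))
        - x ^ 2 * Real.logb 2 (x ^ 2)
        - (1 - x) ^ 2 * Real.logb 2 ((1 - x) ^ 2)) / (2 * x * (1 - x))
      = -1 + (gE x + gE (1-x)) / Real.log 2 := by
  have hx0 : x ≠ 0 := ne_of_gt hx.1
  have h1x : (1:ℝ) - x ≠ 0 := by have := hx.2; intro h; linarith [sub_eq_zero.mp h]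
  have hl2 : Real.log 2 ≠ 0 := ne_of_gt (Real.log_pos (by norm_num))
  have e1 : Real.log (2 * x * (1-x)) = Real.log 2 + Real.log x + Real.log (1-x) := by
    rw [Real.log_mul (by positivity) h1x, Real.log_mul (by norm_num) hx0]
  have e2 : Real.log (x^2) = 2 * Real.log x := by
    rw [Real.log_pow]; push_cast; ring
  have e3 : Real.log ((1-x)^2) = 2 * Real.log (1-x) := by
    rw [Real.log_pow]; push_cast; ring
  simp only [Real.logb, e1, e2, e3]
  unfold gE
  have h2 : (1:ℝ) - (1 - x) = x := by ring
  rw [h2]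
  field_simp
  ring

/-- The entropy function
`E(x) = [-2x(1-x)log₂(2x(1-x)) - x²log₂(x²) - (1-x)²log₂((1-x)²)] / (2x(1-x))`
on `(0,1)` is minimized uniquely at `x = 1/2`, where `E(1/2) = 3`. -/
theorem stmt_10 :
    let E : ℝ → ℝ := fun x =>
      (-(2 * x * (1 - x)) * Real.logb 2 (2 * x * (1 - x))
        - x ^ 2 * Real.logb 2 (x ^ 2)
        - (1 - x) ^ 2 * Real.logb 2 ((1 - x) ^ 2)) / (2 * x * (1 - x))
    E (1/2) = 3 ∧ ∀ x ∈ Set.Ioo (0:ℝ) 1, x ≠ 1/2 → E (1/2) < E x := by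
  intro E
  have hl2 : Real.log 2 ≠ 0 := ne_of_gt (Real.log_pos (by norm_num))
  have hhalf : E (1/2) = 3 := by
    have := lemD (1/2) (by norm_num)
    simp only [E, this]
    norm_num [gE_half]
    field_simp
    ring
  refine ⟨hhalf, ?_⟩
  intro x hx hne
  rw [hhalf]
  have := lemD x hx
  simp only [E, this]
  have hkey := lemC x hx hne
  have hl2p : (0:ℝ) < Real.log 2 := Real.log_pos (by norm_num)
  rw [show (3:ℝ) = -1 + 4*Real.log 2/Real.log 2 by rw [mul_div_assoc, div_self hl2]; ring]
  gcongr
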